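/- arXiv:2206.04107 — 2 statements merged into one kernel-verified Lean document; each statement's English description precedes it below -/
import Mathlib

section
/- Let $P(x) = \tfrac{1}{2}\sigma^2 x^3 + \sigma^2 \theta x^2 + \left(\tfrac{1}{2}\sigma^2 \theta^2 - \lambda - 1\right)x - \theta$, where $\sigma \ne 0$, $\theta > 0$, $\lambda > 0$. Then $P$ has three distinct real roots $c_1 < -\theta < c_2 < 0 < c_3$. -/
theorem stmt_6 (σ θ lam : ℝ) (hσ : σ ≠ 0) (hθ : 0 < θ) (hlam : 0 < lam) :
    ∃ c₁ c₂ c₃ : ℝ,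
      (fun x : ℝ => (1 / 2) * σ ^ 2 * x ^ 3 + σ ^ 2 * θ * x ^ 2
        + ((1 / 2) * σ ^ 2 * θ ^ 2 - lam - 1) * x - θ) c₁ = 0 ∧
      (fun x : ℝ => (1 / 2) * σ ^ 2 * x ^ 3 + σ ^ 2 * θ * x ^ 2
        + ((1 / 2) * σ ^ 2 * θ ^ 2 - lam - 1) * x - θ) c₂ = 0 ∧
      (fun x : ℝ => (1 / 2) * σ ^ 2 * x ^ 3 + σ ^ 2 * θ * x ^ 2
        + ((1 / 2) * σ ^ 2 * θ ^ 2 - lam - 1) * x - θ) c₃ = 0 ∧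
      c₁ < -θ ∧ -θ < c₂ ∧ c₂ < 0 ∧ 0 < c₃ := by
  set f : ℝ → ℝ := fun x : ℝ => (1 / 2) * σ ^ 2 * x ^ 3 + σ ^ 2 * θ * x ^ 2
        + ((1 / 2) * σ ^ 2 * θ ^ 2 - lam - 1) * x - θ with hf
  have hs : (0:ℝ) < σ ^ 2 := by positivity
  have hcont : Continuous f := by fun_prop
  set d : ℝ := 2 * (lam + 1) / σ ^ 2 with hd
  set e : ℝ := 2 * (lam + 1 + θ) / σ ^ 2 with he
  have hdpos : 0 < d := by positivity
  have hepos : 0 < e := by positivity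
  have hds : σ ^ 2 * d = 2 * (lam + 1) := by rw [hd, mul_div_assoc']; exact mul_div_cancel_left₀ _ hs.ne'
  have hes : σ ^ 2 * e = 2 * (lam + 1 + θ) := by rw [he, mul_div_assoc']; exact mul_div_cancel_left₀ _ hs.ne'
  set A : ℝ := -θ - (1 + d) with hA
  set B : ℝ := 1 + e with hB
  have hAlt : A < -θ := by simp only [hA]; linarith
  have hBpos : 0 < B := by simp only [hB]; linarith
  have hfθ : 0 < f (-θ) := by
    have : f (-θ) = lam * θ := by simp only [hf]; ring
    rw [this]; positivity
  have hf0 : f 0 < 0 := by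
    have : f 0 = -θ := by simp only [hf]; ring
    rw [this]; linarith
  have hfA : f A < 0 := by
    simp only [hf, hA]
    nlinarith [mul_pos hs hdpos, sq_nonneg d, mul_nonneg (sq_nonneg d) hs.le,
      mul_nonneg (mul_nonneg (sq_nonneg d) hs.le) hdpos.le,
      mul_nonneg (mul_nonneg hs.le hdpos.le) hθ.le,
      mul_nonneg (mul_nonneg (sq_nonneg d) hs.le) hθ.le, mul_pos hdpos hθ]
  have hfB : 0 < f B := by
    simp only [hf, hB]
    nlinarith [mul_pos hs hepos, sq_nonneg e, mul_nonneg (sq_nonneg e) hs.le,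
      mul_nonneg (mul_nonneg (sq_nonneg e) hs.le) hepos.le,
      mul_nonneg (mul_nonneg hs.le hepos.le) hθ.le,
      mul_nonneg (mul_nonneg (sq_nonneg e) hs.le) hθ.le, mul_pos hepos hθ]
  -- c₁ ∈ (A, -θ)
  obtain ⟨c₁, hc₁mem, hc₁⟩ := intermediate_value_Ioo hAlt.le hcont.continuousOn
    (Set.mem_Ioo.mpr ⟨hfA, hfθ⟩)
  -- c₂ ∈ (-θ, 0)
  obtain ⟨c₂, hc₂mem, hc₂⟩ := intermediate_value_Ioo' (by linarith : -θ ≤ (0:ℝ))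
    hcont.continuousOn (Set.mem_Ioo.mpr ⟨hf0, hfθ⟩)
  -- c₃ ∈ (0, B)
  obtain ⟨c₃, hc₃mem, hc₃⟩ := intermediate_value_Ioo hBpos.le hcont.continuousOn
    (Set.mem_Ioo.mpr ⟨hf0, hfB⟩)
  exact ⟨c₁, c₂, c₃, hc₁, hc₂, hc₃, hc₁mem.2, hc₂mem.1, hc₂mem.2, hc₃mem.1⟩
end

section
/- Let $f : \mathbb{R} \to \mathbb{R}$ be continuous and define $Mf(x) = \inf\{f(x+\eta) + g(\eta) : \eta \ne 0\}$ with $g(\xi) = C + c\xi$ for $\xi > 0$, $g(0) = 0$, $g(\xi) = D - d\xi$ for $\xi < 0$, $C, D > 0$, $c, d \ge 0$. Suppose $a < \alpha \le \beta < b$, $f$ is differentiable on $[a,b]$ with: $f'(x) \le -c$ on $[a,\alpha]$, $-c \le f'(x) \le d$ on $[\alpha,\beta]$, $f'(x) \ge d$ on $[\beta, b]$, and $f'(\alpha) = -c$, $f'(\beta) = d$, and $f$ extended linearly with slope $-c$ on $(-\infty,a]$ and slope $d$ on $[b,\infty)$. Then for $\alpha \le x \le \beta$: $Mf(x) = f(x)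 + \min\{C, D\}$, and in particular $f(x) \le Mf(x)$ on $[\alpha, \beta]$. -/
open Set

/-- The impulse cost function: fixed plus proportional cost. -/
noncomputable def impulseCost (C c D d : ℝ) (ξ : ℝ) : ℝ :=
  if 0 < ξ then C + c * ξ else if ξ < 0 then D - d * ξ else 0

/-- The intervention operator `Mf(x) = inf { f(x+η) + g(η) : η ≠ 0 }`. -/
noncomputable def interventionOp (C c D d : ℝ) (f : ℝ → ℝ) (x : ℝ) : ℝ :=
  sInf {v : ℝ | ∃ η : ℝ, η ≠ 0 ∧ v = f (x + η) + impulseCost C c D d η}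

theorem stmt_19 (C c D d : ℝ) (hC : 0 < C) (hD : 0 < D) (hc : 0 ≤ c) (hd : 0 ≤ d)
    (f : ℝ → ℝ) (hf : Continuous f) (f' : ℝ → ℝ)
    (a α β b : ℝ) (haα : a < α) (hαβ : α ≤ β) (hβb : β < b)
    (hderiv : ∀ x ∈ Icc a b, HasDerivWithinAt f (f' x) (Icc a b) x)
    (h₁ : ∀ x ∈ Icc a α, f' x ≤ -c)
    (h₂ : ∀ x ∈ Icc α β, -c ≤ f' x ∧ f' x ≤ d)
    (h₃ : ∀ x ∈ Icc β b, d ≤ f' x)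
    (hα : f' α = -c) (hβ : f' β = d)
    (hleft : ∀ x ≤ a, f x = f a + (-c) * (x - a))
    (hright : ∀ x ≥ b, f x = f b + d * (x - b)) :
    ∀ x ∈ Icc α β, interventionOp C c D d f x = f x + min C D ∧
      f x ≤ interventionOp C c D d f x := by
  have hαb : α < b := lt_of_le_of_lt hαβ hβb
  have haβ : a < β := lt_of_lt_of_le haα hαβ
  -- monotonicity of f y + c*y on [α, b]
  have mono1 : MonotoneOn (fun y => f y + c * y) (Icc α b) := by
    apply monotoneOn_of_hasDerivWithinAt_nonneg (convex_Icc α b)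
      (hf.continuousOn.add (continuous_const.mul continuous_id).continuousOn)
      (f' := fun y => f' y + c)
    · intro x hx
      rw [interior_Icc] at hx
      have hx' : x ∈ Icc a b := ⟨le_of_lt (haα.trans hx.1), hx.2.le⟩
      have h1 := (hderiv x hx').mono (fun y hy => ⟨le_of_lt (haα.trans hy.1), hy.2.le⟩ :
        Ioo α b ⊆ Icc a b)
      have h2 : HasDerivWithinAt (fun y : ℝ => c * y) c (Ioo α b) x := by
        simpa using (hasDerivWithinAt_id x (Ioo α b)).const_mul c
      rw [interior_Icc]; exact h1.add h2
    · intro x hx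
      rw [interior_Icc] at hx
      rcases le_total x β with h | h
      · have := (h₂ x ⟨hx.1.le, h⟩).1; linarith
      · have := h₃ x ⟨h, hx.2.le⟩; linarith
  -- monotonicity of d*y - f y on [a, β]
  have mono2 : MonotoneOn (fun y => d * y - f y) (Icc a β) := by
    apply monotoneOn_of_hasDerivWithinAt_nonneg (convex_Icc a β)
      ((continuous_const.mul continuous_id).continuousOn.sub hf.continuousOn)
      (f' := fun y => d - f' y)
    · intro x hx
      rw [interior_Icc] at hx
      have hx' : x ∈ Icc a b := ⟨hx.1.le, le_of_lt (hx.2.trans hβb)⟩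
      have h1 := (hderiv x hx').mono (fun y hy => ⟨hy.1.le, le_of_lt (hy.2.trans hβb)⟩ :
        Ioo a β ⊆ Icc a b)
      have h2 : HasDerivWithinAt (fun y : ℝ => d * y) d (Ioo a β) x := by
        simpa using (hasDerivWithinAt_id x (Ioo a β)).const_mul d
      rw [interior_Icc]; exact h2.sub h1
    · intro x hx
      rw [interior_Icc] at hx
      rcases le_total α x with h | h
      · have := (h₂ x ⟨h, hx.2.le⟩).2; linarith
      · have := h₁ x ⟨hx.1.le, h⟩; linarith
  -- key global inequalities
  have key1 : ∀ y z : ℝ, α ≤ y → y ≤ z → f y + c * y ≤ f z + c * z := by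
    intro y z hy hyz
    rcases le_total z b with hz | hz
    · exact mono1 ⟨hy, hyz.trans hz⟩ ⟨hy.trans hyz, hz⟩ hyz
    · rcases le_total y b with hyb | hyb
      · have step1 : f y + c * y ≤ f b + c * b :=
          mono1 ⟨hy, hyb⟩ ⟨hαb.le, le_refl b⟩ hyb
        have hz' := hright z hz
        nlinarith
      · have h1 := hright y hyb
        have h2 := hright z hz
        nlinarith
  have key2 : ∀ y z : ℝ, y ≤ z → z ≤ β → d * y - f y ≤ d * z - f z := by
    intro y z hyz hz
    rcases le_total a y with hy | hy
    · exact mono2 ⟨hy, hyz.trans hz⟩ ⟨hy.trans hyz, hz⟩ hyz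
    · rcases le_total a z with hza | hza
      · have step1 : d * a - f a ≤ d * z - f z := mono2 ⟨le_refl a, haβ.le⟩ ⟨hza, hz⟩ hza
        have hy' := hleft y hy
        nlinarith
      · have h1 := hleft y hy
        have h2 := hleft z hza
        nlinarith
  intro x hx
  set S := {v : ℝ | ∃ η : ℝ, η ≠ 0 ∧ v = f (x + η) + impulseCost C c D d η} with hS
  have hne : S.Nonempty := ⟨f (x + 1) + impulseCost C c D d 1, 1, one_ne_zero, rfl⟩
  have lower : ∀ v ∈ S, f x + min C D ≤ v := by
    rintro v ⟨η, hη, rfl⟩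
    rcases lt_trichotomy η 0 with hneg | h0 | hpos
    · have hcost : impulseCost C c D d η = D - d * η := by
        simp [impulseCost, hneg, not_lt.mpr hneg.le]
      have := key2 (x + η) x (by linarith) hx.2
      have hmin : min C D ≤ D := min_le_right _ _
      rw [hcost]; linarith
    · exact absurd h0 hη
    · have hcost : impulseCost C c D d η = C + c * η := by
        simp [impulseCost, hpos]
      have := key1 x (x + η) hx.1 (by linarith)
      have hmin : min C D ≤ C := min_le_left _ _
      rw [hcost]; linarith
  have hbdd : BddBelow S := ⟨f x + min C D, lower⟩
  have hge : f x + min C D ≤ sInf S := le_csInf hne lower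
  -- upper bounds via small jumps
  have hleC : sInf S ≤ f x + C := by
    apply le_of_forall_pos_le_add
    intro ε hε
    obtain ⟨δ, hδ, hδ'⟩ := Metric.continuousAt_iff.mp hf.continuousAt (ε / 2) (by positivity)
    set η := min (δ / 2) (ε / (2 * (c + 1))) with hηdef
    have hηpos : 0 < η := lt_min (by positivity) (by positivity)
    have hdist : dist (x + η) x < δ := by
      rw [Real.dist_eq]
      have : |x + η - x| = η := by rw [abs_of_pos (by linarith)]; ring_nf
      rw [this]; exact lt_of_le_of_lt (min_le_left _ _) (by linarith)
    have hfb := hδ' hdist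
    rw [Real.dist_eq] at hfb
    have hfb' : f (x + η) - f x < ε / 2 := lt_of_le_of_lt (le_abs_self _) hfb
    have hcη : c * η ≤ ε / 2 := by
      have h1 : η ≤ ε / (2 * (c + 1)) := min_le_right _ _
      have h2 : c * η ≤ c * (ε / (2 * (c + 1))) := by nlinarith
      have h3 : c * (ε / (2 * (c + 1))) ≤ ε / 2 := by
        rw [mul_div_assoc', div_le_div_iff₀ (by positivity) (by norm_num : (0:ℝ) < 2)]
        nlinarith
      linarith
    have hmem : f (x + η) + impulseCost C c D d η ∈ S := ⟨η, ne_of_gt hηpos, rfl⟩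
    have hcost : impulseCost C c D d η = C + c * η := by simp [impulseCost, hηpos]
    calc sInf S ≤ f (x + η) + impulseCost C c D d η := csInf_le hbdd hmem
      _ = f (x + η) + (C + c * η) := by rw [hcost]
      _ ≤ f x + C + ε := by linarith
  have hleD : sInf S ≤ f x + D := by
    apply le_of_forall_pos_le_add
    intro ε hε
    obtain ⟨δ, hδ, hδ'⟩ := Metric.continuousAt_iff.mp hf.continuousAt (ε / 2) (by positivity)
    set η := min (δ / 2) (ε / (2 * (d + 1))) with hηdef
    have hηpos : 0 < η := lt_min (by positivity) (by positivity)
    have hdist : dist (x + -η) x < δ := by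
      rw [Real.dist_eq]
      have : |x + -η - x| = η := by rw [show x + -η - x = -η by ring, abs_neg,
        abs_of_pos hηpos]
      rw [this]; exact lt_of_le_of_lt (min_le_left _ _) (by linarith)
    have hfb := hδ' hdist
    rw [Real.dist_eq] at hfb
    have hfb' : f (x + -η) - f x < ε / 2 := lt_of_le_of_lt (le_abs_self _) hfb
    have hdη : d * η ≤ ε / 2 := by
      have h1 : η ≤ ε / (2 * (d + 1)) := min_le_right _ _
      have h2 : d * η ≤ d * (ε / (2 * (d + 1))) := by nlinarith
      have h3 : d * (ε / (2 * (d + 1))) ≤ ε / 2 := by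
        rw [mul_div_assoc', div_le_div_iff₀ (by positivity) (by norm_num : (0:ℝ) < 2)]
        nlinarith
      linarith
    have hmem : f (x + -η) + impulseCost C c D d (-η) ∈ S :=
      ⟨-η, by simpa using ne_of_gt hηpos, rfl⟩
    have hcost : impulseCost C c D d (-η) = D - d * (-η) := by
      simp [impulseCost, hηpos, not_lt.mpr (neg_nonpos.mpr hηpos.le)]
    calc sInf S ≤ f (x + -η) + impulseCost C c D d (-η) := csInf_le hbdd hmem
      _ = f (x + -η) + (D + d * η) := by rw [hcost]; ring_nf
      _ ≤ f x + D + ε := by linarith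
  have hle : sInf S ≤ f x + min C D := by
    rcases le_total C D with h | h
    · rw [min_eq_left h]; exact hleC
    · rw [min_eq_right h]; exact hleD
  have heq : interventionOp C c D d f x = f x + min C D := le_antisymm hle hge
  refine ⟨heq, ?_⟩
  rw [heq]
  have : 0 < min C D := lt_min hC hD
  linarith
end
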